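/- Let α and β be probability measures on a measurable space with α ≪ β, and let A be a measurable set. Then α(A) ≤ H(α|β) + (1 + e/2)·β(A). -/

import Mathlib

open MeasureTheory
open scoped Classical ENNReal

/-- Relative entropy (KL divergence) of `α` with respect to `β`, valued in `EReal`. -/
noncomputable def relEnt {Ω : Type*} [MeasurableSpace Ω] (α β : Measure Ω) : EReal :=
  if α ≪ β ∧ Integrable (fun ω => Real.log ((α.rnDeriv β) ω).toReal) α
  then ((∫ ω, Real.log ((α.rnDeriv β) ω).toReal ∂α : ℝ) : EReal)
  else ⊤

/-- Fenchel's inequality `x * y ≤ x log x - x + e^y` for `x ≥ 0`. -/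
lemma fenchel_aux (x : ℝ) (hx : 0 ≤ x) (y : ℝ) :
    x * y ≤ x * Real.log x - x + Real.exp y := by
  rcases eq_or_lt_of_le hx with h | h
  · rw [← h]
    simpa using (Real.exp_pos y).le
  · have h1 : (y - Real.log x) + 1 ≤ Real.exp (y - Real.log x) := Real.add_one_le_exp _
    have h2 : Real.exp (y - Real.log x) = Real.exp y / x := by
      rw [Real.exp_sub, Real.exp_log h]
    rw [h2] at h1
    have h3 : ((y - Real.log x) + 1) * x ≤ Real.exp y := (le_div_iff₀ h).mp h1
    nlinarith

lemma coe_ennreal_eq_toReal {x : ℝ≥0∞} (hx : x ≠ ⊤) :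
    (x : EReal) = ((x.toReal : ℝ) : EReal) := by
  nth_rewrite 1 [← ENNReal.ofReal_toReal hx]
  rw [EReal.coe_ennreal_ofReal, max_eq_left ENNReal.toReal_nonneg]

/-- For probability measures `α ≪ β` and any measurable set `A`,
`α(A) ≤ H(α|β) + (1 + e/2)·β(A)`. -/
theorem stmt2 {Ω : Type*} [MeasurableSpace Ω] (α β : Measure Ω)
    [IsProbabilityMeasure α] [IsProbabilityMeasure β] (hαβ : α ≪ β)
    (A : Set Ω) (hA : MeasurableSet A) :
    ((α A : ℝ≥0∞) : EReal)
      ≤ relEnt α β + ((1 + Real.exp 1 / 2 : ℝ) : EReal) * ((β A : ℝ≥0∞) : EReal) := by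
  rw [relEnt]
  by_cases hint : Integrable (fun ω => Real.log ((α.rnDeriv β) ω).toReal) α
  · rw [if_pos ⟨hαβ, hint⟩]
    set f : Ω → ℝ := fun ω => ((α.rnDeriv β) ω).toReal with hf
    have hf_nonneg : ∀ ω, 0 ≤ f ω := fun ω => ENNReal.toReal_nonneg
    have hf_int : Integrable f β := Measure.integrable_toReal_rnDeriv
    -- the second function in the Fenchel bound
    set g : Ω → ℝ := fun ω => A.indicator (fun _ => Real.exp 1 - 1) ω + 1 with hg
    have hg_int : Integrable g β :=
      ((integrable_const (Real.exp 1 - 1)).indicator hA).add (integrable_const 1)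
    have hfl_int : Integrable (fun ω => f ω * Real.log (f ω)) β := by
      have := (integrable_rnDeriv_smul_iff hαβ
        (f := fun ω => Real.log (f ω))).mpr hint
      simpa [smul_eq_mul] using this
    -- pointwise inequality : indicator f ≤ f log f - f + g
    have hpt : ∀ ω, A.indicator f ω ≤ f ω * Real.log (f ω) - f ω + g ω := by
      intro ω
      by_cases hω : ω ∈ A
      · have := fenchel_aux (f ω) (hf_nonneg ω) 1
        simp only [hg, Set.indicator_of_mem hω, mul_one] at this ⊢
        linarith
      · have := fenchel_aux (f ω) (hf_nonneg ω) 0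
        simp only [hg, Set.indicator_of_notMem hω, mul_zero, Real.exp_zero] at this ⊢
        linarith
    -- integrate
    have hmain : ∫ ω, A.indicator f ω ∂β
        ≤ ∫ ω, (f ω * Real.log (f ω) - f ω + g ω) ∂β :=
      integral_mono (hf_int.indicator hA) ((hfl_int.sub hf_int).add hg_int) hpt
    have hLHS : ∫ ω, A.indicator f ω ∂β = (α A).toReal := by
      rw [integral_indicator hA]
      exact Measure.setIntegral_toReal_rnDeriv hαβ A
    have hH : ∫ ω, f ω * Real.log (f ω) ∂β
        = ∫ ω, Real.log ((α.rnDeriv β) ω).toReal ∂α := by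
      have := integral_rnDeriv_smul hαβ (f := fun ω => Real.log (f ω))
      simpa [smul_eq_mul] using this
    have hf1 : ∫ ω, f ω ∂β = 1 := by
      rw [Measure.integral_toReal_rnDeriv hαβ]
      simp
    have hgval : ∫ ω, g ω ∂β = (Real.exp 1 - 1) * (β A).toReal + 1 := by
      rw [hg, integral_add ((integrable_const (Real.exp 1 - 1)).indicator hA)
        (integrable_const 1), integral_indicator_const _ hA]
      simp [mul_comm, Measure.real]
    have hRHS : ∫ ω, (f ω * Real.log (f ω) - f ω + g ω) ∂β
        = (∫ ω, Real.log ((α.rnDeriv β) ω).toReal ∂α) + (Real.exp 1 - 1) * (β A).toReal := by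
      have hsub : Integrable (fun ω => f ω * Real.log (f ω) - f ω) β :=
        hfl_int.sub hf_int
      rw [integral_add hsub hg_int, integral_sub hfl_int hf_int, hH, hf1, hgval]
      ring
    have key : (α A).toReal
        ≤ (∫ ω, Real.log ((α.rnDeriv β) ω).toReal ∂α)
          + (1 + Real.exp 1 / 2) * (β A).toReal := by
      rw [hLHS, hRHS] at hmain
      nlinarith [ENNReal.toReal_nonneg (a := β A), Real.exp_one_lt_d9]
    rw [coe_ennreal_eq_toReal (measure_ne_top α A),
      coe_ennreal_eq_toReal (measure_ne_top β A), ← EReal.coe_mul, ← EReal.coe_add,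
      EReal.coe_le_coe_iff]
    exact key
  · rw [if_neg (fun h => hint h.2), EReal.top_add_of_ne_bot]
    · exact le_top
    · intro h
      have h1 : (0 : EReal) ≤ ((1 + Real.exp 1 / 2 : ℝ) : EReal) * ((β A : ℝ≥0∞) : EReal) := by
        apply mul_nonneg _ (EReal.coe_ennreal_nonneg _)
        rw [← EReal.coe_zero, EReal.coe_le_coe_iff]
        positivity
      rw [h] at h1
      exact absurd h1 (by simp)
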